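/- Let 𝒜 be an additive category with all set-indexed coproducts, let [(X_i)_{i∈I},(u_{ij}:X_i⟶X_j)_{i≤j}] and [(Y_λ)_{λ∈Λ},(v_{λμ}:Y_λ⟶Y_μ)_{λ≤μ}] be two direct systems in 𝒜 admitting colimits, with canonical maps u_j : X_j ⟶ colim X_i and v_μ : Y_μ ⟶ colim Y_λ, and let f : colim X_i ⟶ colim Y_λ be a morphism such that: (†) for each j ∈ I there is μ ∈ Λ such that f ∘ u_j factors through v_μ; and (††) v_μ is a monomorphism for all μ ∈ Λ. Then there exist a directed set Ω and a direct system of morphisms (g_ω : X_ω ⟶ Y_ω)_{ω∈Ω} (i.e. a direct system in the arrow category of 𝒜) such that (a) each X_ω belongs to {X_i : i ∈ I} and each Y_ω belongs to {Y_λ : λ ∈ Λ}, and (b) the colimit of this system of morphisms exists and colim g_ω : colim X_ω ⟶ colim Y_ω is isomorphic to f in the arrow category. Moreover, if α is a regular cardinal such that I and Λ are α-directed, then Ω can be chosen α-directed. -/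

import Mathlib

open CategoryTheory CategoryTheory.Limits

universe v u

/-- A preorder `I` is `α`-directed when every subset of cardinality `< α` has an upper bound. -/
def IsCardinalDirected (α : Cardinal.{v}) (I : Type v) [Preorder I] : Prop :=
  ∀ S : Set I, Cardinal.mk S < α → ∃ b : I, ∀ s ∈ S, s ≤ b

/-- The natural transformation `Arrow.leftFunc ⟶ Arrow.rightFunc` whose component at an
arrow `a` is the morphism `a.hom` itself. -/
def arrowHomNatTrans (C : Type u) [Category.{v} C] :
    (Arrow.leftFunc : Arrow C ⥤ C) ⟶ Arrow.rightFunc where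
  app a := a.hom
  naturality _ _ f := Arrow.w f

/-- An `α`-directed system of morphisms in `C`: an `α`-directed preorder `Ω` together with
a functor `Ω ⥤ Arrow C`. -/
structure CardinalDirectedArrowSystem (α : Cardinal.{v}) (C : Type u) [Category.{v} C] where
  /-- the index set -/
  Ω : Type v
  /-- the order on the index set -/
  [pre : Preorder Ω]
  /-- the index set is `α`-directed -/
  directed : IsCardinalDirected α Ω
  /-- the direct system of morphisms, as a functor to the arrow category -/
  D : Ω ⥤ Arrow C

attribute [instance] CardinalDirectedArrowSystem.pre

section Lazard

variable {C : Type u} [Category.{v} C] {I Λ : Type v} [Preorder I] [Preorder Λ]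
  (X : I ⥤ C) (Y : Λ ⥤ C) [HasColimit X] [HasColimit Y] (f : colimit X ⟶ colimit Y)

/-- index set -/
def LOmega : Type v :=
  {p : Σ (i : I) (l : Λ), X.obj i ⟶ Y.obj l //
    p.2.2 ≫ colimit.ι Y p.2.1 = colimit.ι X p.1 ≫ f}

instance : Preorder (LOmega X Y f) where
  le a b := ∃ (hi : a.1.1 ≤ b.1.1) (hl : a.1.2.1 ≤ b.1.2.1),
    X.map (homOfLE hi) ≫ b.1.2.2 = a.1.2.2 ≫ Y.map (homOfLE hl)
  le_refl a := ⟨le_refl _, le_refl _, by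
    rw [show homOfLE (le_refl a.1.1) = 𝟙 a.1.1 from rfl,
      show homOfLE (le_refl a.1.2.1) = 𝟙 a.1.2.1 from rfl]
    simp⟩
  le_trans a b c h h' := by
    obtain ⟨hi, hl, hc⟩ := h
    obtain ⟨hi', hl', hc'⟩ := h'
    refine ⟨hi.trans hi', hl.trans hl', ?_⟩
    rw [show homOfLE (hi.trans hi') = homOfLE hi ≫ homOfLE hi' from rfl,
      show homOfLE (hl.trans hl') = homOfLE hl ≫ homOfLE hl' from rfl,
      Functor.map_comp, Functor.map_comp, Category.assoc, hc', reassoc_of% hc]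

theorem LOmega.le_i {a b : LOmega X Y f} (h : a ≤ b) : a.1.1 ≤ b.1.1 := h.choose

theorem LOmega.le_l {a b : LOmega X Y f} (h : a ≤ b) : a.1.2.1 ≤ b.1.2.1 :=
  h.choose_spec.choose

theorem LOmega.comm {a b : LOmega X Y f} (h : a ≤ b) :
    X.map (homOfLE (LOmega.le_i X Y f h)) ≫ b.1.2.2 =
      a.1.2.2 ≫ Y.map (homOfLE (LOmega.le_l X Y f h)) :=
  h.choose_spec.choose_spec

/-- the system -/
def LD : LOmega X Y f ⥤ Arrow C where
  obj ω := Arrow.mk ω.1.2.2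
  map {a b} φ := Arrow.homMk (u := X.map (homOfLE (LOmega.le_i X Y f (leOfHom φ))))
    (v := Y.map (homOfLE (LOmega.le_l X Y f (leOfHom φ)))) (LOmega.comm X Y f (leOfHom φ))
  map_id a := by
    ext
    · dsimp; simp
    · dsimp; simp
  map_comp {a b c} φ ψ := by
    ext
    · simp only [Arrow.comp_left, Arrow.comp_right, Arrow.homMk_left, Arrow.homMk_right]
      rw [← Functor.map_comp]
      congr 1
    · simp only [Arrow.comp_left, Arrow.comp_right, Arrow.homMk_left, Arrow.homMk_right]
      rw [← Functor.map_comp]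
      congr 1

/-- left projection -/
def LpL : LOmega X Y f ⥤ I where
  obj ω := ω.1.1
  map φ := homOfLE (LOmega.le_i X Y f (leOfHom φ))

/-- right projection -/
def LpR : LOmega X Y f ⥤ Λ where
  obj ω := ω.1.2.1
  map φ := homOfLE (LOmega.le_l X Y f (leOfHom φ))

end Lazard

/-- Generalized Lazard's Trick: let `𝒜` be an additive category with
coproducts, `X : I ⥤ 𝒜` and `Y : Λ ⥤ 𝒜` two direct systems admitting colimits, with `I`
and `Λ` `α`-directed for a regular cardinal `α`, and let `f : colim X ⟶ colim Y` be a
morphism such that (†) for each `j` the composite `colimit.ι X j ≫ f` factors through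
some `colimit.ι Y μ`, and (††) each `colimit.ι Y μ` is a monomorphism.  Then there is an
`α`-directed system of morphisms `(g_ω : X_ω ⟶ Y_ω)` such that (a) each `X_ω` is one of
the `X.obj i` and each `Y_ω` is one of the `Y.obj λ`, and (b) the colimit of the system
of morphisms exists and `colim g_ω` is isomorphic to `f` in the arrow category. -/
theorem generalized_lazard_trick {C : Type u} [Category.{v} C] [Preadditive C]
    [HasCoproducts.{v} C] (α : Cardinal.{v}) (hα : α.IsRegular)
    {I Λ : Type v} [Preorder I] [Preorder Λ]
    (hI : IsCardinalDirected α I) (hΛ : IsCardinalDirected α Λ)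
    (X : I ⥤ C) (Y : Λ ⥤ C) [HasColimit X] [HasColimit Y]
    (f : colimit X ⟶ colimit Y)
    (hfact : ∀ j : I, ∃ (μ : Λ) (g : X.obj j ⟶ Y.obj μ),
      g ≫ colimit.ι Y μ = colimit.ι X j ≫ f)
    (hmono : ∀ μ : Λ, Mono (colimit.ι Y μ)) :
    ∃ S : CardinalDirectedArrowSystem α C,
      (∀ ω : S.Ω, (∃ i : I, (S.D.obj ω).left = X.obj i) ∧
        (∃ l : Λ, (S.D.obj ω).right = Y.obj l)) ∧
      ∃ (cL : Cocone (S.D ⋙ Arrow.leftFunc)) (hL : IsColimit cL)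
        (cR : Cocone (S.D ⋙ Arrow.rightFunc)) (_ : IsColimit cR)
        (eL : cL.pt ≅ colimit X) (eR : cR.pt ≅ colimit Y),
        hL.desc ((Cocone.precompose (Functor.whiskerLeft S.D (arrowHomNatTrans C))).obj cR) ≫
            eR.hom = eL.hom ≫ f := by
  -- pairwise and finite facts
  have hpair : ∀ (l0 μ : Λ), ∃ l1 : Λ, l0 ≤ l1 ∧ μ ≤ l1 := by
    intro l0 μ
    obtain ⟨b, hb⟩ := hΛ {l0, μ}
      (lt_of_lt_of_le ((Set.finite_singleton _).insert _).lt_aleph0 hα.aleph0_le)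
    exact ⟨b, hb _ (by simp), hb _ (by simp)⟩
  obtain ⟨i0⟩ : Nonempty I := by
    obtain ⟨b, -⟩ := hI ∅ (by simpa using hα.pos)
    exact ⟨b⟩
  -- directedness of LOmega
  have hdir : IsCardinalDirected α (LOmega X Y f) := by
    intro S hS
    obtain ⟨is, his⟩ := hI ((fun ω : LOmega X Y f => ω.1.1) '' S)
      (lt_of_le_of_lt Cardinal.mk_image_le hS)
    obtain ⟨l0, hl0⟩ := hΛ ((fun ω : LOmega X Y f => ω.1.2.1) '' S)
      (lt_of_le_of_lt Cardinal.mk_image_le hS)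
    obtain ⟨μ, g, hg⟩ := hfact is
    obtain ⟨l1, h01, hμ1⟩ := hpair l0 μ
    refine ⟨⟨⟨is, l1, g ≫ Y.map (homOfLE hμ1)⟩, ?_⟩, ?_⟩
    · rw [Category.assoc, colimit.w Y, hg]
    · intro s hs
      have hsi : s.1.1 ≤ is := his _ ⟨s, hs, rfl⟩
      have hsl : s.1.2.1 ≤ l1 := (hl0 _ ⟨s, hs, rfl⟩).trans h01
      refine ⟨hsi, hsl, ?_⟩
      haveI := hmono l1
      rw [← cancel_mono (colimit.ι Y l1)]
      simp only [Category.assoc, colimit.w]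
      rw [hg, s.2, colimit.w_assoc]
  haveI : Nonempty (LOmega X Y f) := by
    obtain ⟨μ, g, hg⟩ := hfact i0
    exact ⟨⟨⟨i0, μ, g⟩, hg⟩⟩
  haveI : IsDirected (LOmega X Y f) (· ≤ ·) := by
    constructor
    intro a b
    obtain ⟨c, hc⟩ := hdir {a, b}
      (lt_of_lt_of_le ((Set.finite_singleton _).insert _).lt_aleph0 hα.aleph0_le)
    exact ⟨c, hc _ (by simp), hc _ (by simp)⟩
  haveI : (LpL X Y f).Final := by
    apply Functor.final_of_exists_of_isFiltered
    · intro i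
      obtain ⟨μ, g, hg⟩ := hfact i
      exact ⟨⟨⟨i, μ, g⟩, hg⟩, ⟨𝟙 i⟩⟩
    · intro d c s s'
      exact ⟨c, 𝟙 c, Subsingleton.elim _ _⟩
  haveI : (LpR X Y f).Final := by
    apply Functor.final_of_exists_of_isFiltered
    · intro l
      obtain ⟨μ, g, hg⟩ := hfact i0
      obtain ⟨l1, hl1, hμ1⟩ := hpair l μ
      refine ⟨⟨⟨i0, l1, g ≫ Y.map (homOfLE hμ1)⟩, ?_⟩, ⟨homOfLE hl1⟩⟩
      rw [Category.assoc, colimit.w Y, hg]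
    · intro d c s s'
      exact ⟨c, 𝟙 c, Subsingleton.elim _ _⟩
  refine ⟨⟨LOmega X Y f, hdir, LD X Y f⟩, fun ω => ⟨⟨ω.1.1, rfl⟩, ⟨ω.1.2.1, rfl⟩⟩, ?_⟩
  let ιL : LD X Y f ⋙ Arrow.leftFunc ≅ LpL X Y f ⋙ X := Iso.refl _
  let ιR : LD X Y f ⋙ Arrow.rightFunc ≅ LpR X Y f ⋙ Y := Iso.refl _
  let cL := (Cocone.precompose ιL.hom).obj ((colimit.cocone X).whisker (LpL X Y f))
  let hL : IsColimit cL := (IsColimit.precomposeHomEquiv ιL _).symm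
      ((Functor.Final.isColimitWhiskerEquiv (LpL X Y f) _).symm (colimit.isColimit X))
  let cR := (Cocone.precompose ιR.hom).obj ((colimit.cocone Y).whisker (LpR X Y f))
  let hR : IsColimit cR := (IsColimit.precomposeHomEquiv ιR _).symm
      ((Functor.Final.isColimitWhiskerEquiv (LpR X Y f) _).symm (colimit.isColimit Y))
  have key : hL.desc ((Cocone.precompose
      (Functor.whiskerLeft (LD X Y f) (arrowHomNatTrans C))).obj cR) = f := by
    apply IsColimit.hom_ext hL
    intro ω
    rw [hL.fac]
    show ω.1.2.2 ≫ 𝟙 (Y.obj ω.1.2.1) ≫ colimit.ι Y ω.1.2.1 =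
      (𝟙 (X.obj ω.1.1) ≫ colimit.ι X ω.1.1) ≫ f
    rw [Category.id_comp, Category.id_comp, ω.2]
  refine ⟨cL, hL, cR, hR, Iso.refl _, Iso.refl _, ?_⟩
  exact (Category.comp_id _).trans (key.trans (Category.id_comp f).symm)
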